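/- arXiv:1804.05350 — 3 statements merged into one kernel-verified Lean document; each statement's English description precedes it below -/
import Mathlib

section
/- Let φ : ℝ⁴ → ℝ be continuously differentiable in the variables (a1, a2, a3, a4), and suppose that for all (a1,a2,a3,a4) ∈ ℝ⁴: a4·∂φ/∂a2 = 0, a4·∂φ/∂a1 − (5a3/6)·∂φ/∂a2 = 0, −(2a4/5)·∂φ/∂a3 + (5a1/6)·∂φ/∂a2 = 0, and −a1·∂φ/∂a1 + (2a3/5)·∂φ/∂a3 − (3a2/5)·∂φ/∂a2 = 0. Then φ depends only on a4, i.e., φ(a1,a2,a3,a4) = φ(0,0,0,a4) for all (a1,a2,a3,a4) ∈ ℝ⁴. -/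
/-- A continuously differentiable function `φ : ℝ⁴ → ℝ` satisfying the
determining system of first-order linear PDEs
`a4·∂φ/∂a2 = 0`, `a4·∂φ/∂a1 − (5a3/6)·∂φ/∂a2 = 0`,
`−(2a4/5)·∂φ/∂a3 + (5a1/6)·∂φ/∂a2 = 0`,
`−a1·∂φ/∂a1 + (2a3/5)·∂φ/∂a3 − (3a2/5)·∂φ/∂a2 = 0`
depends only on `a4`. -/
theorem stmt_2 (φ : ℝ × ℝ × ℝ × ℝ → ℝ) (hφ : ContDiff ℝ 1 φ)
    (h1 : ∀ a1 a2 a3 a4 : ℝ,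
      a4 * fderiv ℝ φ (a1, a2, a3, a4) (0, 1, 0, 0) = 0)
    (h2 : ∀ a1 a2 a3 a4 : ℝ,
      a4 * fderiv ℝ φ (a1, a2, a3, a4) (1, 0, 0, 0)
        - (5 * a3 / 6) * fderiv ℝ φ (a1, a2, a3, a4) (0, 1, 0, 0) = 0)
    (h3 : ∀ a1 a2 a3 a4 : ℝ,
      -(2 * a4 / 5) * fderiv ℝ φ (a1, a2, a3, a4) (0, 0, 1, 0)
        + (5 * a1 / 6) * fderiv ℝ φ (a1, a2, a3, a4) (0, 1, 0, 0) = 0)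
    (h4 : ∀ a1 a2 a3 a4 : ℝ,
      -a1 * fderiv ℝ φ (a1, a2, a3, a4) (1, 0, 0, 0)
        + (2 * a3 / 5) * fderiv ℝ φ (a1, a2, a3, a4) (0, 0, 1, 0)
        - (3 * a2 / 5) * fderiv ℝ φ (a1, a2, a3, a4) (0, 1, 0, 0) = 0) :
    ∀ a1 a2 a3 a4 : ℝ, φ (a1, a2, a3, a4) = φ (0, 0, 0, a4) := by
  have hdiff : Differentiable ℝ φ := hφ.differentiable one_ne_zero
  have hcont : Continuous (fun p => fderiv ℝ φ p) := hφ.continuous_fderiv one_ne_zero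
  -- partials vanish when a4 ≠ 0
  have key : ∀ (v : ℝ × ℝ × ℝ × ℝ),
      (∀ a1 a2 a3 a4 : ℝ, a4 ≠ 0 → fderiv ℝ φ (a1, a2, a3, a4) v = 0) →
      ∀ a1 a2 a3 a4 : ℝ, fderiv ℝ φ (a1, a2, a3, a4) v = 0 := by
    intro v hv a1 a2 a3 a4
    have hc : Continuous (fun t : ℝ => fderiv ℝ φ (a1, a2, a3, t) v) := by
      apply Continuous.clm_apply _ continuous_const
      exact hcont.comp (by continuity)
    have heq : (fun t : ℝ => fderiv ℝ φ (a1, a2, a3, t) v) = fun _ => 0 := by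
      apply Continuous.ext_on (dense_compl_singleton (0:ℝ)) hc continuous_const
      intro t ht
      exact hv a1 a2 a3 t ht
    exact congrFun heq a4
  have D2 : ∀ a1 a2 a3 a4 : ℝ, fderiv ℝ φ (a1, a2, a3, a4) (0, 1, 0, 0) = 0 := by
    apply key
    intro a1 a2 a3 a4 h4'
    have := h1 a1 a2 a3 a4
    exact (mul_eq_zero.mp this).resolve_left h4'
  have D1 : ∀ a1 a2 a3 a4 : ℝ, fderiv ℝ φ (a1, a2, a3, a4) (1, 0, 0, 0) = 0 := by
    apply key
    intro a1 a2 a3 a4 h4'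
    have h := h2 a1 a2 a3 a4
    rw [D2] at h
    have : a4 * fderiv ℝ φ (a1, a2, a3, a4) (1, 0, 0, 0) = 0 := by linarith
    exact (mul_eq_zero.mp this).resolve_left h4'
  have D3 : ∀ a1 a2 a3 a4 : ℝ, fderiv ℝ φ (a1, a2, a3, a4) (0, 0, 1, 0) = 0 := by
    apply key
    intro a1 a2 a3 a4 h4'
    have h := h3 a1 a2 a3 a4
    rw [D2] at h
    have : a4 * fderiv ℝ φ (a1, a2, a3, a4) (0, 0, 1, 0) = 0 := by linarith
    exact (mul_eq_zero.mp this).resolve_left h4'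
  intro a1 a2 a3 a4
  -- the derivative in any direction (b1,b2,b3,0) vanishes
  have Dv : ∀ (q : ℝ × ℝ × ℝ × ℝ), fderiv ℝ φ q (a1, a2, a3, 0) = 0 := by
    rintro ⟨q1, q2, q3, q4⟩
    have hsum : (a1, a2, a3, (0:ℝ)) =
        a1 • ((1:ℝ), (0:ℝ), (0:ℝ), (0:ℝ)) + a2 • (0, 1, 0, 0) + a3 • (0, 0, 1, 0) := by
      simp [Prod.ext_iff]
    rw [hsum, map_add, map_add, map_smul, map_smul, map_smul,
      D1 q1 q2 q3 q4, D2 q1 q2 q3 q4, D3 q1 q2 q3 q4]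
    simp
  -- constant along the segment
  set γ : ℝ → ℝ × ℝ × ℝ × ℝ := fun t => (t * a1, t * a2, t * a3, a4) with hγ
  have hγd : ∀ t : ℝ, HasDerivAt γ (a1, a2, a3, 0) t := by
    intro t
    have := (HasDerivAt.prodMk ((hasDerivAt_id t).mul_const a1)
      (HasDerivAt.prodMk ((hasDerivAt_id t).mul_const a2)
        (HasDerivAt.prodMk ((hasDerivAt_id t).mul_const a3) (hasDerivAt_const t a4))))
    simpa using this
  have hf : ∀ t : ℝ, HasDerivAt (fun t => φ (γ t)) 0 t := by
    intro t
    have := ((hdiff (γ t)).hasFDerivAt).comp_hasDerivAt t (hγd t)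
    rwa [Dv (γ t)] at this
  have hconst : ∀ s t : ℝ, φ (γ s) = φ (γ t) := by
    intro s t
    exact is_const_of_deriv_eq_zero (fun x => (hf x).differentiableAt)
      (fun x => (hf x).deriv) s t
  have := hconst 1 0
  simpa [hγ] using this
end

section
/- For ε = (ε1, ε2, ε3, ε4) ∈ ℝ⁴ define the map A_ε : ℝ⁴ → ℝ⁴ sending (a1,a2,a3,a4) to (ã1,ã2,ã3,ã4) where ã1 = −a4·ε1·e^{ε4} + a1·e^{ε4}, ã2 = (5a3ε1/6)·e^{3ε4/5} − (3a4ε2/5)·e^{3ε4/5} + a2·e^{3ε4/5} + (5a4ε1ε3/6)·e^{ε4} − (5a1ε3/6)·e^{ε4}, ã3 = (2a4ε3/5) + a3·e^{−2ε4/5}, ã4 = a4. Then for every nonzero a = (a1,a2,a3,a4) ∈ ℝ⁴ there exist ε ∈ ℝ⁴, a nonzero λ ∈ ℝ, and either: λ·A_ε(a) = (1,0,0,0), or λ·A_ε(a) = (0,1,0,0), or λ·A_ε(a) = (0,0,1,0), or λ·A_ε(a) = (0,0,0,1), or λ·A_ε(a) = (α, 0, δ, 0) for some α ∈ ℝ and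 δ ∈ {1,−1}. -/
/-- The full adjoint action `A_ε` of the symmetry group on coefficient vectors
`(a1, a2, a3, a4)` of a general Lie algebra element. -/
noncomputable def adjAct (ε a : ℝ × ℝ × ℝ × ℝ) : ℝ × ℝ × ℝ × ℝ :=
  (-a.2.2.2 * ε.1 * Real.exp ε.2.2.2 + a.1 * Real.exp ε.2.2.2,
   (5 * a.2.2.1 * ε.1 / 6) * Real.exp (3 * ε.2.2.2 / 5)
     - (3 * a.2.2.2 * ε.2.1 / 5) * Real.exp (3 * ε.2.2.2 / 5)
     + a.2.1 * Real.exp (3 * ε.2.2.2 / 5)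
     + (5 * a.2.2.2 * ε.1 * ε.2.2.1 / 6) * Real.exp ε.2.2.2
     - (5 * a.1 * ε.2.2.1 / 6) * Real.exp ε.2.2.2,
   2 * a.2.2.2 * ε.2.2.1 / 5 + a.2.2.1 * Real.exp (-(2 * ε.2.2.2 / 5)),
   a.2.2.2)

/-- Every nonzero coefficient vector can be mapped, by the adjoint
action together with a nonzero scaling, to one of the representatives
`(1,0,0,0)`, `(0,1,0,0)`, `(0,0,1,0)`, `(0,0,0,1)`, or `(α,0,±1,0)`,
corresponding to the one-dimensional optimal system `{V1, V2, V3, V4, α·V1 ± V3}`. -/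
theorem stmt_3 (a : ℝ × ℝ × ℝ × ℝ) (ha : a ≠ 0) :
    ∃ (ε : ℝ × ℝ × ℝ × ℝ) (lam : ℝ), lam ≠ 0 ∧
      (lam • adjAct ε a = ((1 : ℝ), (0 : ℝ), (0 : ℝ), (0 : ℝ)) ∨
       lam • adjAct ε a = ((0 : ℝ), (1 : ℝ), (0 : ℝ), (0 : ℝ)) ∨
       lam • adjAct ε a = ((0 : ℝ), (0 : ℝ), (1 : ℝ), (0 : ℝ)) ∨
       lam • adjAct ε a = ((0 : ℝ), (0 : ℝ), (0 : ℝ), (1 : ℝ)) ∨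
       ∃ (α δ : ℝ), (δ = 1 ∨ δ = -1) ∧
         lam • adjAct ε a = (α, (0 : ℝ), δ, (0 : ℝ))) := by
  obtain ⟨a1, a2, a3, a4⟩ := a
  by_cases h4 : a4 = 0
  · by_cases h3 : a3 = 0
    · by_cases h1 : a1 = 0
      · have h2 : a2 ≠ 0 := by
          intro h2; exact ha (by simp [h1, h2, h3, h4, Prod.ext_iff])
        refine ⟨0, a2⁻¹, inv_ne_zero h2, Or.inr (Or.inl ?_)⟩
        simp [adjAct, h1, h3, h4, Prod.ext_iff, Prod.smul_def, smul_eq_mul]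
        field_simp
      · refine ⟨(0, 0, 6 * a2 / (5 * a1), 0), a1⁻¹, inv_ne_zero h1, Or.inl ?_⟩
        simp [adjAct, h3, h4, Prod.ext_iff, Prod.smul_def, smul_eq_mul]
        field_simp
        exact ⟨trivial, Or.inr (by ring)⟩
    · refine ⟨(-(6 * a2) / (5 * a3), 0, 0, 0), |a3|⁻¹,
        inv_ne_zero (abs_ne_zero.mpr h3), Or.inr (Or.inr (Or.inr (Or.inr
          ⟨a1 / |a3|, a3 / |a3|, ?_, ?_⟩)))⟩
      · rcases abs_choice a3 with h | h
        · left; rw [h]; field_simp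
        · right; rw [h]; field_simp
      · have hab : |a3| ≠ 0 := abs_ne_zero.mpr h3
        simp [adjAct, h4, Prod.ext_iff, Prod.smul_def, smul_eq_mul, div_eq_mul_inv]
        constructor
        · ring
        · field_simp
          exact ⟨Or.inr (by ring), trivial⟩
  · refine ⟨(a1 / a4, (5 * a3 * (a1 / a4) / 6 + a2) * 5 / (3 * a4),
      -(5 * a3) / (2 * a4), 0), a4⁻¹, inv_ne_zero h4,
      Or.inr (Or.inr (Or.inr (Or.inl ?_)))⟩
    simp [adjAct, Prod.ext_iff, Prod.smul_def, smul_eq_mul]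
    refine ⟨by field_simp; exact Or.inr (by ring), by field_simp; exact Or.inr (by ring), by field_simp; exact Or.inr (by ring), by field_simp⟩
end

section
/- Let α ∈ ℝ, α ≠ 0, and let (Pₙ), (Qₙ), (Rₙ) be real sequences (with P₀, Q₀, R₀, P₁, P₂ arbitrary) satisfying: (i) Q₁ = (1 − 18α²P₀P₁)/(12α²); (ii) for every n ≥ 1, Q_{n+1} = −(3/(2(n+1)))·Σ_{k=0}^{n}(n−k+1)·Pₖ·P_{n−k+1}; (iii) for every n ≥ 0, R_{n+1} = −(1/(18α²(n+1)))·[9α²·Σ_{k=0}^{n}(n−k+1)·Pₖ·Q_{n−k+1} + 18α²·Σ_{k=0}^{n}(n−k+1)·Qₖ·P_{n−k+1} + 4n·Pₙ + 6Pₙ]; (iv) for n = 0 and for every n ≥ 2, P_{n+3} = −(1/(1296α⁴(n+1)(n+2)(n+3)))·[−450α²·Σ_{k=0}^{n}(n−k+1)·Pₖ·R_{n−k+1} − 900α²·Σ_{k=0}^{n}(n−k+1)·Rₖ·P_{n−k+1} + 50·Σ_{k=0}^{n}Pₖ·P_{n−k} + 150·Σ_{k=0}^{n}(n−k)·Pₖ·P_{n−k}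 − 125Qₙ]; and (v) P₄ = [4050α⁴P₀³P₂ + 2025α⁴P₀²P₁² − 4050α⁴P₀P₁Q₁ − 5400α⁴P₀P₂Q₀ + 8100α⁴P₁R₁ + 10800α⁴P₂R₀ − 3000α²P₀P₁ + 750α²Q₁ + 250]/(186624α⁶). Then the formal power series F = Σₙ Pₙξⁿ, G = Σₙ Qₙξⁿ, H = Σₙ Rₙξⁿ in ℝ[[ξ]] satisfy the formal power series identities: 18α²·F·F′ + 12α²·G′ − 1 = 0; 9α³·F·G′ + 18α³·G·F′ + 18α³·H′ + 4α·ξ·F′ + 6α·F = 0; and 3888α⁶·F′′′ − 1350α⁴·F·H′ − 2700α⁴·H·F′ + 450α²·ξ·F·F′ + 150α²·F² − 375α²·G − 125ξ = 0. -/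
open PowerSeries

private lemma coeff_mk_mul_deriv (f g : ℕ → ℝ) (n : ℕ) :
    (coeff n) (mk f * derivative ℝ (mk g)) =
    ∑ k ∈ Finset.range (n+1), ((n:ℝ)-(k:ℝ)+1) * f k * g (n-k+1) := by
  rw [coeff_mul, Finset.Nat.sum_antidiagonal_eq_sum_range_succ_mk]
  apply Finset.sum_congr rfl
  intro k hk
  have hk' : k ≤ n := Nat.lt_succ_iff.mp (Finset.mem_range.mp hk)
  rw [coeff_mk, coeff_derivative, coeff_mk, Nat.cast_sub hk']
  ring

private lemma coeff_mk_mul_mk (f : ℕ → ℝ) (n : ℕ) :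
    (coeff n) (mk f * mk f) = ∑ k ∈ Finset.range (n+1), f k * f (n-k) := by
  rw [coeff_mul, Finset.Nat.sum_antidiagonal_eq_sum_range_succ_mk]
  simp [coeff_mk]

set_option maxHeartbeats 1600000 in
/-- For `α ≠ 0`, sequences `(Pₙ), (Qₙ), (Rₙ)` satisfying the stated
recurrence relations give formal power series `F = Σ Pₙξⁿ`, `G = Σ Qₙξⁿ`,
`H = Σ Rₙξⁿ` solving the reduced system
`18α²FF′ + 12α²G′ − 1 = 0`,
`9α³FG′ + 18α³GF′ + 18α³H′ + 4αξF′ + 6αF = 0`,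
`3888α⁶F′′′ − 1350α⁴FH′ − 2700α⁴HF′ + 450α²ξFF′ + 150α²F² − 375α²G − 125ξ = 0`. -/
theorem stmt_5 (α : ℝ) (hα : α ≠ 0) (P Q R : ℕ → ℝ)
    (hQ1 : Q 1 = (1 - 18 * α^2 * P 0 * P 1) / (12 * α^2))
    (hQ : ∀ n : ℕ, 1 ≤ n → Q (n + 1) =
      -(3 / (2 * ((n : ℝ) + 1))) *
        ∑ k ∈ Finset.range (n + 1), ((n : ℝ) - (k : ℝ) + 1) * P k * P (n - k + 1))
    (hR : ∀ n : ℕ, R (n + 1) =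
      -(1 / (18 * α^2 * ((n : ℝ) + 1))) *
        (9 * α^2 * ∑ k ∈ Finset.range (n + 1),
            ((n : ℝ) - (k : ℝ) + 1) * P k * Q (n - k + 1)
          + 18 * α^2 * ∑ k ∈ Finset.range (n + 1),
            ((n : ℝ) - (k : ℝ) + 1) * Q k * P (n - k + 1)
          + 4 * (n : ℝ) * P n + 6 * P n))
    (hP : ∀ n : ℕ, n = 0 ∨ 2 ≤ n → P (n + 3) =
      -(1 / (1296 * α^4 * ((n : ℝ) + 1) * ((n : ℝ) + 2) * ((n : ℝ) + 3))) *
        (-450 * α^2 * ∑ k ∈ Finset.range (n + 1),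
            ((n : ℝ) - (k : ℝ) + 1) * P k * R (n - k + 1)
          - 900 * α^2 * ∑ k ∈ Finset.range (n + 1),
            ((n : ℝ) - (k : ℝ) + 1) * R k * P (n - k + 1)
          + 50 * ∑ k ∈ Finset.range (n + 1), P k * P (n - k)
          + 150 * ∑ k ∈ Finset.range (n + 1), ((n : ℝ) - (k : ℝ)) * P k * P (n - k)
          - 125 * Q n))
    (hP4 : P 4 =
      (4050 * α^4 * (P 0)^3 * P 2 + 2025 * α^4 * (P 0)^2 * (P 1)^2
        - 4050 * α^4 * P 0 * P 1 * Q 1 - 5400 * α^4 * P 0 * P 2 * Q 0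
        + 8100 * α^4 * P 1 * R 1 + 10800 * α^4 * P 2 * R 0
        - 3000 * α^2 * P 0 * P 1 + 750 * α^2 * Q 1 + 250) / (186624 * α^6)) :
    (C (18 * α^2) * mk P * derivative ℝ (mk P)
      + C (12 * α^2) * derivative ℝ (mk Q) - 1 = (0 : ℝ⟦X⟧)) ∧
    (C (9 * α^3) * mk P * derivative ℝ (mk Q)
      + C (18 * α^3) * mk Q * derivative ℝ (mk P)
      + C (18 * α^3) * derivative ℝ (mk R)
      + C (4 * α) * X * derivative ℝ (mk P)
      + C (6 * α) * mk P = (0 : ℝ⟦X⟧)) ∧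
    (C (3888 * α^6) * derivative ℝ (derivative ℝ (derivative ℝ (mk P)))
      - C (1350 * α^4) * mk P * derivative ℝ (mk R)
      - C (2700 * α^4) * mk R * derivative ℝ (mk P)
      + C (450 * α^2) * X * mk P * derivative ℝ (mk P)
      + C (150 * α^2) * (mk P)^2
      - C (375 * α^2) * mk Q - 125 * X = (0 : ℝ⟦X⟧)) := by
  refine ⟨?_, ?_, ?_⟩
  · -- Equation 1
    ext n
    rw [map_sub, map_add, mul_assoc, coeff_C_mul, coeff_C_mul, coeff_mk_mul_deriv,
      coeff_derivative, coeff_mk, coeff_one, map_zero]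
    rcases n with _ | m
    · simp only [Finset.sum_range_one, if_pos rfl]
      norm_num
      rw [hQ1]
      field_simp
      ring
    · rw [hQ (m+1) (by omega), if_neg (by omega)]
      have h1 : ((m:ℝ)+1)+1 ≠ 0 := by positivity
      push_cast
      field_simp
      ring
  · -- Equation 2
    have e1 : C (4 * α) * X * derivative ℝ (mk P)
        = C (4 * α) * (X * derivative ℝ (mk P)) := mul_assoc _ _ _
    ext n
    rw [e1, map_add, map_add, map_add, map_add, mul_assoc, mul_assoc,
      coeff_C_mul, coeff_C_mul, coeff_C_mul, coeff_C_mul, coeff_C_mul,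
      coeff_mk_mul_deriv, coeff_mk_mul_deriv, coeff_derivative, coeff_mk, coeff_mk, map_zero]
    rcases n with _ | m
    · rw [coeff_zero_X_mul, hR 0]
      norm_num
      field_simp
      ring
    · rw [coeff_succ_X_mul, coeff_derivative, coeff_mk, hR (m+1)]
      have h1 : ((m:ℝ)+1)+1 ≠ 0 := by positivity
      push_cast
      field_simp
      ring
  · -- Equation 3
    have e2 : C (450 * α ^ 2) * X * mk P * derivative ℝ (mk P)
        = C (450 * α ^ 2) * (X * (mk P * derivative ℝ (mk P))) := by ring
    have e3 : (125 : ℝ⟦X⟧) * X = C 125 * X := by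
      rw [show ((125 : ℝ⟦X⟧) = C 125) from (map_ofNat (C (R := ℝ)) 125).symm]
    have e4 : (mk P : ℝ⟦X⟧) ^ 2 = mk P * mk P := sq (mk P)
    ext n
    rw [e2, e3, e4, map_sub, map_sub, map_add, map_add, map_sub, map_sub,
      mul_assoc (C (1350 * α ^ 4)), mul_assoc (C (2700 * α ^ 4))]
    simp only [coeff_C_mul, coeff_mk_mul_deriv, coeff_mk_mul_mk, coeff_derivative, coeff_mk,
      coeff_X, map_zero]
    rcases n with _ | n
    · rw [coeff_zero_X_mul, if_neg (by norm_num), hP 0 (Or.inl rfl)]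
      norm_num [Finset.sum_range_one]
      field_simp
      ring
    rcases n with _ | m
    · -- n = 1
      have hQ2 : Q 2 = -(3 / 4) * (2 * P 0 * P 2 + P 1 * P 1) := by
        have h := hQ 1 le_rfl
        rw [h]
        norm_num [Finset.sum_range_succ]
        try ring
      have hR1 : R 1 = -(1 / (18 * α ^ 2)) * (9 * α ^ 2 * (P 0 * Q 1)
          + 18 * α ^ 2 * (Q 0 * P 1) + 6 * P 0) := by
        have h := hR 0
        rw [h]
        norm_num [Finset.sum_range_succ]
        try ring
      have hR2 : R 2 = -(1 / (36 * α ^ 2)) * (9 * α ^ 2 * (2 * P 0 * Q 2 + P 1 * Q 1)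
          + 18 * α ^ 2 * (2 * Q 0 * P 2 + Q 1 * P 1) + 10 * P 1) := by
        have h := hR 1
        rw [h]
        norm_num [Finset.sum_range_succ]
        try ring
      rw [coeff_succ_X_mul, coeff_mk_mul_deriv, if_pos rfl]
      norm_num [Finset.sum_range_succ]
      rw [hP4, hR2, hR1, hQ2, hQ1]
      field_simp
      ring
    · -- n = m + 2
      rw [coeff_succ_X_mul, coeff_mk_mul_deriv, if_neg (by omega),
        hP (m + 1 + 1) (Or.inr (by omega))]
      have hsum : ∑ k ∈ Finset.range (m + 1 + 1 + 1),
          (((m + 1 + 1 : ℕ) : ℝ) - (k : ℝ)) * P k * P (m + 1 + 1 - k)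
          = ∑ k ∈ Finset.range (m + 1 + 1),
            (((m + 1 : ℕ) : ℝ) - (k : ℝ) + 1) * P k * P (m + 1 - k + 1) := by
        rw [Finset.sum_range_succ, sub_self, zero_mul, zero_mul, add_zero]
        apply Finset.sum_congr rfl
        intro k hk
        have hk' : k ≤ m + 1 := Nat.lt_succ_iff.mp (Finset.mem_range.mp hk)
        have hidx : m + 1 + 1 - k = m + 1 - k + 1 := by omega
        rw [hidx]
        push_cast
        ring
      rw [hsum]
      have h1 : ((m : ℝ) + 1 + 1) + 1 ≠ 0 := by positivity
      have h2 : ((m : ℝ) + 1 + 1) + 2 ≠ 0 := by positivity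
      have h3 : ((m : ℝ) + 1 + 1) + 3 ≠ 0 := by positivity
      push_cast
      field_simp
      ring
end
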